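/- Let c > 0 and let (aₙ)_{n≥0} be a sequence of nonnegative reals with a₀ = c satisfying the recursion (n+1) a_{n+1} = Σ_{k=0}^{n} (3(n−k)+2) a_k a_{n−k} + (3n+2)(3n+3)(3n+4) aₙ for all n ≥ 0. Then aₙ ≥ c · (3n+1)! / n! for every n ≥ 0. (Consequently the formal series Σ aₙ tⁿ has zero radius of convergence, so the KdV initial value problem with initial datum u₀(x) = c/(1−x)² has no solution holomorphic near the origin of ℂ².) -/
import Mathlib


/-- **The isolated double pole case (Section 2.4).**
Let `c > 0` and let `(aₙ)` be nonnegative reals with `a₀ = c` satisfying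
`(n+1) a_{n+1} = ∑_{k=0}^{n} (3(n-k)+2) a_k a_{n-k} + (3n+2)(3n+3)(3n+4) aₙ`.
Then `aₙ ≥ c (3n+1)! / n!` for every `n ≥ 0`. -/
theorem kdv_double_pole_coefficient_bound
    (c : ℝ) (hc : 0 < c)
    (a : ℕ → ℝ) (hnonneg : ∀ n, 0 ≤ a n) (ha0 : a 0 = c)
    (hrec : ∀ n : ℕ, ((n : ℝ) + 1) * a (n + 1) =
      (∑ k ∈ Finset.range (n + 1), (3 * ((n : ℝ) - k) + 2) * a k * a (n - k))
        + (3 * (n : ℝ) + 2) * (3 * (n : ℝ) + 3) * (3 * (n : ℝ) + 4) * a n) :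
    ∀ n : ℕ, c * (3 * n + 1).factorial / n.factorial ≤ a n := by
  intro n
  induction n with
  | zero => simp [ha0]
  | succ n ih =>
    have hsum : 0 ≤ ∑ k ∈ Finset.range (n + 1),
        (3 * ((n : ℝ) - k) + 2) * a k * a (n - k) := by
      apply Finset.sum_nonneg
      intro k hk
      have hk' : (k : ℝ) ≤ n := by
        exact_mod_cast Nat.lt_succ_iff.mp (Finset.mem_range.mp hk)
      have h1 : (0 : ℝ) ≤ 3 * ((n : ℝ) - k) + 2 := by linarith
      exact mul_nonneg (mul_nonneg h1 (hnonneg k)) (hnonneg (n - k))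
    have h1 : (3 * (n : ℝ) + 2) * (3 * (n : ℝ) + 3) * (3 * (n : ℝ) + 4) * a n ≤
        ((n : ℝ) + 1) * a (n + 1) := by
      rw [hrec n]; linarith
    have hPpos : (0 : ℝ) < (3 * (n : ℝ) + 2) * (3 * (n : ℝ) + 3) * (3 * (n : ℝ) + 4) := by
      positivity
    have h2 : (3 * (n : ℝ) + 2) * (3 * (n : ℝ) + 3) * (3 * (n : ℝ) + 4) *
        (c * (3 * n + 1).factorial / n.factorial) ≤ ((n : ℝ) + 1) * a (n + 1) :=
      le_trans (mul_le_mul_of_nonneg_left ih hPpos.le) h1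
    have hfac : ((3 * (n + 1) + 1).factorial : ℝ) =
        (3 * (n : ℝ) + 4) * ((3 * (n : ℝ) + 3) * ((3 * (n : ℝ) + 2) *
          ((3 * n + 1).factorial : ℝ))) := by
      have h : 3 * (n + 1) + 1 = (3 * n + 1) + 1 + 1 + 1 := by ring
      rw [h, Nat.factorial_succ, Nat.factorial_succ, Nat.factorial_succ]
      push_cast
      ring
    have hnfac : (((n + 1).factorial : ℝ)) = ((n : ℝ) + 1) * (n.factorial : ℝ) := by
      rw [Nat.factorial_succ]; push_cast; ring
    have hfpos : (0 : ℝ) < (n.factorial : ℝ) := by positivity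
    have hfpos2 : (0 : ℝ) < ((3 * n + 1).factorial : ℝ) := by positivity
    rw [div_le_iff₀ (by positivity)]
    rw [hnfac, hfac]
    have h3 : c * (3 * n + 1).factorial / n.factorial * n.factorial =
        c * (3 * n + 1).factorial := by field_simp
    nlinarith [mul_le_mul_of_nonneg_right h2 hfpos.le, hnonneg (n + 1)]
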